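/- Let r, ω, T > 0 satisfy r³ω² = U₀/4 with U₀ = 2√2+1, and let q_k(t) = r(cos(ωt + kπ/2), sin(ωt + kπ/2)) for k = 1,…,4 with unit masses. Then the Lagrangian action ∫₀^T [ (1/2)∑_k‖q̇_k‖² + U(q(t)) ] dt equals (2r²ω² + U₀/r)·T = (3U₀/(2r))·T. If moreover ω = α/T for some α > 0 (the bodies rotate by angle α in time T), then this action equals 3·2^{−1/3}·U₀^{2/3}·T^{1/3}·α^{2/3}. -/

import Mathlib

lemma e_norm_sq (x : EuclideanSpace ℝ (Fin 2)) : ‖x‖ ^ 2 = x 0 ^ 2 + x 1 ^ 2 := by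
  rw [EuclideanSpace.norm_eq, Real.sq_sqrt (by positivity)]
  simp [Fin.sum_univ_two, sq_abs]

lemma norm_from_sq (x : EuclideanSpace ℝ (Fin 2)) (s : ℝ) (hs : 0 ≤ s)
    (h : ‖x‖ ^ 2 = s ^ 2) : ‖x‖ = s := by
  rw [← Real.sqrt_sq (norm_nonneg x), h, Real.sqrt_sq hs]

lemma aux_dist_sq (r a b : ℝ) (x y : EuclideanSpace ℝ (Fin 2))
    (hx : x = ![r * Real.cos a, r * Real.sin a])
    (hy : y = ![r * Real.cos b, r * Real.sin b]) :
    ‖x - y‖ ^ 2 = 2 * r ^ 2 * (1 - Real.cos (a - b)) := by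
  rw [e_norm_sq]
  have h0 : (x - y) 0 = r * Real.cos a - r * Real.cos b := by
    simp [hx, hy, PiLp.sub_apply]
  have h1 : (x - y) 1 = r * Real.sin a - r * Real.sin b := by
    simp [hx, hy, PiLp.sub_apply]
  rw [h0, h1, Real.cos_sub]
  linear_combination r ^ 2 * Real.sin_sq_add_cos_sq a + r ^ 2 * Real.sin_sq_add_cos_sq b

theorem stmt_15 (r ω T : ℝ) (hr : 0 < r) (hω : 0 < ω) (hT : 0 < T)
    (U₀ : ℝ) (hU₀ : U₀ = 2 * Real.sqrt 2 + 1)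
    (hKepler : r ^ 3 * ω ^ 2 = U₀ / 4)
    (q : Fin 4 → ℝ → EuclideanSpace ℝ (Fin 2))
    (hq : ∀ (k : Fin 4) (t : ℝ),
      q k t = ![r * Real.cos (ω * t + ((k : ℕ) + 1) * Real.pi / 2),
                r * Real.sin (ω * t + ((k : ℕ) + 1) * Real.pi / 2)]) :
    (∫ t in (0:ℝ)..T, ((1/2) * ∑ k : Fin 4, ‖deriv (q k) t‖ ^ 2 +
        ∑ i : Fin 4, ∑ j : Fin 4, if i < j then ‖q i t - q j t‖⁻¹ else 0)) =
      (2 * r ^ 2 * ω ^ 2 + U₀ / r) * T ∧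
    (2 * r ^ 2 * ω ^ 2 + U₀ / r) * T = 3 * U₀ / (2 * r) * T ∧
    ∀ α : ℝ, 0 < α → ω = α / T →
      (2 * r ^ 2 * ω ^ 2 + U₀ / r) * T =
        3 * (2:ℝ) ^ (-(1:ℝ)/3) * U₀ ^ ((2:ℝ)/3) * T ^ ((1:ℝ)/3) * α ^ ((2:ℝ)/3) := by
  have hU₀pos : 0 < U₀ := by
    rw [hU₀]
    have : 0 < Real.sqrt 2 := Real.sqrt_pos.2 (by norm_num)
    positivity
  -- kinetic term
  have hderiv : ∀ (k : Fin 4) (t : ℝ), ‖deriv (q k) t‖ ^ 2 = r ^ 2 * ω ^ 2 := by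
    intro k t
    set c := ((k : ℕ) + 1) * Real.pi / 2 with hc
    have hlin : HasDerivAt (fun s => ω * s + c) ω t := by
      simpa using ((hasDerivAt_id t).const_mul ω).add_const c
    have h0 : HasDerivAt (fun s => r * Real.cos (ω * s + c))
        (r * (-Real.sin (ω * t + c) * ω)) t := hlin.cos.const_mul r
    have h1 : HasDerivAt (fun s => r * Real.sin (ω * s + c))
        (r * (Real.cos (ω * t + c) * ω)) t := hlin.sin.const_mul r
    have hp : HasDerivAt (fun s i => (q k s) i)
        (fun i : Fin 2 =>
          (![r * (-Real.sin (ω * t + c) * ω), r * (Real.cos (ω * t + c) * ω)] : Fin 2 → ℝ) i) t := by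
      apply hasDerivAt_pi.2
      intro i
      fin_cases i
      · simpa only [hq, ← hc, Fin.zero_eta, Matrix.cons_val_zero] using h0
      · simpa only [hq, ← hc, Fin.mk_one, Matrix.cons_val_one, Matrix.head_cons, Matrix.cons_val_zero] using h1
    have hd : HasDerivAt (q k)
        (WithLp.toLp 2 (![r * (-Real.sin (ω * t + c) * ω), r * (Real.cos (ω * t + c) * ω)])
          : EuclideanSpace ℝ (Fin 2)) t :=
      (((EuclideanSpace.equiv (Fin 2) ℝ).symm :
          (Fin 2 → ℝ) →L[ℝ] EuclideanSpace ℝ (Fin 2)).hasFDerivAt).comp_hasDerivAt t hp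
    rw [hd.deriv, e_norm_sq]
    simp only [WithLp.ofLp_toLp, Matrix.cons_val_zero, Matrix.cons_val_one, Matrix.head_cons]
    linear_combination r ^ 2 * ω ^ 2 * Real.sin_sq_add_cos_sq (ω * t + c)
  -- potential term
  have hpot : ∀ t : ℝ,
      (∑ i : Fin 4, ∑ j : Fin 4, if i < j then ‖q i t - q j t‖⁻¹ else 0) = U₀ / r := by
    intro t
    have hs2 : Real.sqrt 2 * Real.sqrt 2 = 2 := Real.mul_self_sqrt (by norm_num)
    have hs2pos : 0 < Real.sqrt 2 := Real.sqrt_pos.2 (by norm_num)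
    have hq0 : q 0 t = ![r * Real.cos (ω * t + Real.pi / 2), r * Real.sin (ω * t + Real.pi / 2)] := by
      have e : ((((0:Fin 4):ℕ):ℝ) + 1) * Real.pi / 2 = Real.pi / 2 := by
        norm_num [show ((0:Fin 4):ℕ) = 0 from rfl]
      rw [hq 0 t, e]
    have hq1 : q 1 t = ![r * Real.cos (ω * t + Real.pi), r * Real.sin (ω * t + Real.pi)] := by
      have e : ((((1:Fin 4):ℕ):ℝ) + 1) * Real.pi / 2 = Real.pi := by
        norm_num [show ((1:Fin 4):ℕ) = 1 from rfl]
      rw [hq 1 t, e]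
    have hq2 : q 2 t = ![r * Real.cos (ω * t + 3 * Real.pi / 2), r * Real.sin (ω * t + 3 * Real.pi / 2)] := by
      have e : ((((2:Fin 4):ℕ):ℝ) + 1) * Real.pi / 2 = 3 * Real.pi / 2 := by
        norm_num [show ((2:Fin 4):ℕ) = 2 from rfl]
      rw [hq 2 t, e]
    have hq3 : q 3 t = ![r * Real.cos (ω * t + 2 * Real.pi), r * Real.sin (ω * t + 2 * Real.pi)] := by
      have e : ((((3:Fin 4):ℕ):ℝ) + 1) * Real.pi / 2 = 2 * Real.pi := by
        norm_num [show ((3:Fin 4):ℕ) = 3 from rfl]; ring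
      rw [hq 3 t, e]
    have c3 : Real.cos (3 * Real.pi / 2) = 0 := by
      rw [show 3 * Real.pi / 2 = Real.pi + Real.pi / 2 by ring, Real.cos_add,
        Real.cos_pi_div_two, Real.sin_pi, Real.cos_pi, Real.sin_pi_div_two]
      ring
    have d01 : ‖q 0 t - q 1 t‖ = Real.sqrt 2 * r := by
      apply norm_from_sq _ _ (by positivity)
      rw [aux_dist_sq r _ _ _ _ hq0 hq1,
        show ω * t + Real.pi / 2 - (ω * t + Real.pi) = -(Real.pi / 2) by ring,
        Real.cos_neg, Real.cos_pi_div_two]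
      linear_combination (-(r ^ 2)) * hs2
    have d02 : ‖q 0 t - q 2 t‖ = 2 * r := by
      apply norm_from_sq _ _ (by positivity)
      rw [aux_dist_sq r _ _ _ _ hq0 hq2,
        show ω * t + Real.pi / 2 - (ω * t + 3 * Real.pi / 2) = -Real.pi by ring,
        Real.cos_neg, Real.cos_pi]
      ring
    have d03 : ‖q 0 t - q 3 t‖ = Real.sqrt 2 * r := by
      apply norm_from_sq _ _ (by positivity)
      rw [aux_dist_sq r _ _ _ _ hq0 hq3,
        show ω * t + Real.pi / 2 - (ω * t + 2 * Real.pi) = -(3 * Real.pi / 2) by ring,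
        Real.cos_neg, c3]
      linear_combination (-(r ^ 2)) * hs2
    have d12 : ‖q 1 t - q 2 t‖ = Real.sqrt 2 * r := by
      apply norm_from_sq _ _ (by positivity)
      rw [aux_dist_sq r _ _ _ _ hq1 hq2,
        show ω * t + Real.pi - (ω * t + 3 * Real.pi / 2) = -(Real.pi / 2) by ring,
        Real.cos_neg, Real.cos_pi_div_two]
      linear_combination (-(r ^ 2)) * hs2
    have d13 : ‖q 1 t - q 3 t‖ = 2 * r := by
      apply norm_from_sq _ _ (by positivity)
      rw [aux_dist_sq r _ _ _ _ hq1 hq3,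
        show ω * t + Real.pi - (ω * t + 2 * Real.pi) = -Real.pi by ring,
        Real.cos_neg, Real.cos_pi]
      ring
    have d23 : ‖q 2 t - q 3 t‖ = Real.sqrt 2 * r := by
      apply norm_from_sq _ _ (by positivity)
      rw [aux_dist_sq r _ _ _ _ hq2 hq3,
        show ω * t + 3 * Real.pi / 2 - (ω * t + 2 * Real.pi) = -(Real.pi / 2) by ring,
        Real.cos_neg, Real.cos_pi_div_two]
      linear_combination (-(r ^ 2)) * hs2
    have inv1 : (Real.sqrt 2 * r)⁻¹ = Real.sqrt 2 / (2 * r) := by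
      rw [eq_div_iff (by positivity)]
      field_simp
      linear_combination (-1:ℝ) * hs2
    simp only [Fin.sum_univ_four]
    rw [if_neg (by decide), if_pos (by decide), if_pos (by decide), if_pos (by decide),
      if_neg (by decide), if_neg (by decide), if_pos (by decide), if_pos (by decide),
      if_neg (by decide), if_neg (by decide), if_neg (by decide), if_pos (by decide),
      if_neg (by decide), if_neg (by decide), if_neg (by decide), if_neg (by decide)]
    rw [d01, d02, d03, d12, d13, d23, inv1, hU₀]
    have hrne : r ≠ 0 := hr.ne'
    field_simp
    ring

  have hconst : ∀ t : ℝ,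
      ((1/2) * ∑ k : Fin 4, ‖deriv (q k) t‖ ^ 2 +
        ∑ i : Fin 4, ∑ j : Fin 4, if i < j then ‖q i t - q j t‖⁻¹ else 0)
      = 2 * r ^ 2 * ω ^ 2 + U₀ / r := by
    intro t
    rw [hpot t]
    have hsum : ∑ k : Fin 4, ‖deriv (q k) t‖ ^ 2 = 4 * (r ^ 2 * ω ^ 2) := by
      rw [Fin.sum_univ_four, hderiv, hderiv, hderiv, hderiv]; ring
    rw [hsum]; ring
  have h2' : 2 * r ^ 2 * ω ^ 2 = U₀ / (2 * r) := by
    rw [eq_div_iff (by positivity)]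
    linear_combination 4 * hKepler
  have part2 : (2 * r ^ 2 * ω ^ 2 + U₀ / r) * T = 3 * U₀ / (2 * r) * T := by
    rw [h2', div_add_div _ _ (by positivity) hr.ne']
    rw [show U₀ * r + 2 * r * U₀ = 3 * U₀ * r by ring]
    rw [show (3:ℝ) * U₀ / (2 * r) = 3 * U₀ * r / (2 * r * r) by
      rw [eq_div_iff (by positivity)]
      field_simp]
  refine ⟨?_, part2, ?_⟩
  · rw [intervalIntegral.integral_congr (g := fun _ => 2 * r ^ 2 * ω ^ 2 + U₀ / r)
      (fun t _ => hconst t)]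
    rw [intervalIntegral.integral_const, smul_eq_mul]
    ring
  · intro α hα hωα
    rw [part2]
    have hr3 : r ^ 3 = U₀ * T ^ 2 / (4 * α ^ 2) := by
      rw [hωα] at hKepler
      rw [eq_div_iff (by positivity)]
      field_simp at hKepler
      linear_combination hKepler
    set L := 3 * U₀ / (2 * r) * T with hL
    set R := 3 * (2:ℝ) ^ (-(1:ℝ)/3) * U₀ ^ ((2:ℝ)/3) * T ^ ((1:ℝ)/3) * α ^ ((2:ℝ)/3) with hR
    have hLpos : 0 < L := by rw [hL]; positivity
    have hRpos : 0 < R := by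
      rw [hR]
      have p1 := Real.rpow_pos_of_pos (show (0:ℝ) < 2 by norm_num) (-(1:ℝ)/3)
      have p2 := Real.rpow_pos_of_pos hU₀pos ((2:ℝ)/3)
      have p3 := Real.rpow_pos_of_pos hT ((1:ℝ)/3)
      have p4 := Real.rpow_pos_of_pos hα ((2:ℝ)/3)
      positivity
    have e1 : ((2:ℝ) ^ (-(1:ℝ)/3)) ^ (3:ℕ) = 2⁻¹ := by
      rw [← Real.rpow_natCast ((2:ℝ) ^ (-(1:ℝ)/3)) 3, ← Real.rpow_mul (by norm_num)]
      norm_num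
    have e2 : (U₀ ^ ((2:ℝ)/3)) ^ (3:ℕ) = U₀ ^ 2 := by
      rw [← Real.rpow_natCast (U₀ ^ ((2:ℝ)/3)) 3, ← Real.rpow_mul hU₀pos.le]
      norm_num
    have e3 : (T ^ ((1:ℝ)/3)) ^ (3:ℕ) = T := by
      rw [← Real.rpow_natCast (T ^ ((1:ℝ)/3)) 3, ← Real.rpow_mul hT.le]
      norm_num
    have e4 : (α ^ ((2:ℝ)/3)) ^ (3:ℕ) = α ^ 2 := by
      rw [← Real.rpow_natCast (α ^ ((2:ℝ)/3)) 3, ← Real.rpow_mul hα.le]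
      norm_num
    have hRcube : R ^ 3 = 27 * U₀ ^ 2 * T * α ^ 2 / 2 := by
      rw [hR]
      rw [show (3 * (2:ℝ) ^ (-(1:ℝ)/3) * U₀ ^ ((2:ℝ)/3) * T ^ ((1:ℝ)/3) * α ^ ((2:ℝ)/3)) ^ 3
        = 27 * ((2:ℝ) ^ (-(1:ℝ)/3)) ^ (3:ℕ) * (U₀ ^ ((2:ℝ)/3)) ^ (3:ℕ)
          * (T ^ ((1:ℝ)/3)) ^ (3:ℕ) * (α ^ ((2:ℝ)/3)) ^ (3:ℕ) by ring]
      rw [e1, e2, e3, e4]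
      ring
    have hLcube : L ^ 3 = 27 * U₀ ^ 2 * T * α ^ 2 / 2 := by
      rw [hL]
      have hstep : (3 * U₀ / (2 * r) * T) ^ 3 = 27 * U₀ ^ 3 * T ^ 3 / (8 * r ^ 3) := by
        rw [div_mul_eq_mul_div, div_pow, div_eq_div_iff (by positivity) (by positivity)]
        ring
      rw [hstep, hr3, div_eq_div_iff (by positivity) (by norm_num)]
      field_simp
      ring
    have hcube : L ^ 3 = R ^ 3 := by rw [hLcube, hRcube]
    exact (pow_left_strictMonoOn₀ (n := 3) (by norm_num)).injOn hLpos.le hRpos.le hcube
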